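/- Let G be a core graph that is not isomorphic to the 5-wheel W5 and not isomorphic to the complement of W5, and suppose G contains a 5-hole C. Then every vertex u ∈ V(G) \ V(C) satisfies exactly one of the following: (i) u has exactly two neighbors on C and these two neighbors are consecutive on C; (ii) u has exactly three neighbors on C and these three neighbors are not three consecutive vertices of C. -/

import Mathlib

open SimpleGraph

namespace TP

/-- A set of vertices is independent: no two of its vertices are adjacent. -/
def IsIndep {V : Type*} (G : SimpleGraph V) (S : Set V) : Prop :=
  S.Pairwise fun u v => ¬ G.Adj u v

/-- The finite vertex set `s` induces a cycle of length `n` in `G`. -/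
def IsInducedCycle {V : Type*} (G : SimpleGraph V) (n : ℕ) (s : Finset V) : Prop :=
  3 ≤ n ∧ s.card = n ∧ Nonempty (G.induce (s : Set V) ≃g SimpleGraph.cycleGraph n)

/-- The polytope `P(G)` given by nonnegativity, edge and odd-cycle inequalities. -/
def tPolytope {V : Type*} [Fintype V] (G : SimpleGraph V) : Set (V → ℝ) :=
  {x | (∀ v, 0 ≤ x v ∧ x v ≤ 1) ∧
    (∀ ⦃u v⦄, G.Adj u v → x u + x v ≤ 1) ∧
    (∀ (n : ℕ) (s : Finset V), Odd n → IsInducedCycle G n s →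
      ∑ v ∈ s, x v ≤ ((n : ℝ) - 1) / 2)}

/-- The independent set polytope: the convex hull of characteristic vectors of
independent sets. -/
def stabPolytope {V : Type*} [Fintype V] (G : SimpleGraph V) : Set (V → ℝ) :=
  convexHull ℝ {x | ∃ S : Set V, IsIndep G S ∧ x = S.indicator fun _ => (1 : ℝ)}

/-- A graph is t-perfect if `P(G)` equals its independent set polytope. -/
def TPerfect {V : Type*} [Fintype V] (G : SimpleGraph V) : Prop :=
  tPolytope G = stabPolytope G

/-- The graph obtained from `G` by a t-contraction at `v` : the closed neighbourhood
of `v` is replaced by a single new vertex (`none`), adjacent to every vertex that had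
a neighbour in the closed neighbourhood of `v`. -/
def tContract {V : Type*} (G : SimpleGraph V) (v : V) :
    SimpleGraph (Option {w : V // w ≠ v ∧ ¬ G.Adj v w}) :=
  SimpleGraph.fromRel fun a b =>
    match a, b with
    | some a, some b => G.Adj a.1 b.1
    | some a, none => ∃ x, (x = v ∨ G.Adj v x) ∧ G.Adj a.1 x
    | none, _ => False

/-- A bundled finite simple graph. -/
structure FinGraph : Type 1 where
  V : Type
  [fintype : Fintype V]
  graph : SimpleGraph V

attribute [instance] FinGraph.fintype

def FinGraph.of {V : Type} [Fintype V] (G : SimpleGraph V) : FinGraph :=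
  FinGraph.mk V G

/-- `B` is obtained from `A` by deleting one vertex (up to isomorphism). -/
def DeleteStep (A B : FinGraph) : Prop :=
  ∃ v : A.V, Nonempty (B.graph ≃g A.graph.induce {w | w ≠ v})

/-- `B` is obtained from `A` by a t-contraction at a vertex whose neighbourhood is
independent (up to isomorphism). -/
def ContractStep (A B : FinGraph) : Prop :=
  ∃ v : A.V, IsIndep A.graph (A.graph.neighborSet v) ∧
    Nonempty (B.graph ≃g tContract A.graph v)

/-- One step: a vertex deletion or a t-contraction. -/
def Step (A B : FinGraph) : Prop := DeleteStep A B ∨ ContractStep A B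

/-- `TMinor B A` : `B` is a t-minor of `A`, i.e. obtained from `A` by a sequence of
vertex deletions and t-contractions. -/
def TMinor (B A : FinGraph) : Prop := Relation.ReflTransGen Step A B

/-- `B` is a proper t-minor of `A` : a t-minor with fewer vertices. -/
def ProperTMinor (B A : FinGraph) : Prop :=
  TMinor B A ∧ Fintype.card B.V < Fintype.card A.V

/-- A graph is minimally t-imperfect if it is not t-perfect but every proper t-minor
of it is t-perfect. -/
def MinimallyTImperfect {V : Type} [Fintype V] (G : SimpleGraph V) : Prop :=
  ¬ TPerfect G ∧ ∀ B : FinGraph, ProperTMinor B (FinGraph.of G) → TPerfect B.graph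

/-- A core graph: every proper t-minor of `G` and every proper t-minor of its
complement is t-perfect. -/
def IsCore {V : Type} [Fintype V] (G : SimpleGraph V) : Prop :=
  (∀ B : FinGraph, ProperTMinor B (FinGraph.of G) → TPerfect B.graph) ∧
  (∀ B : FinGraph, ProperTMinor B (FinGraph.of Gᶜ) → TPerfect B.graph)

/-- A partition of `V \ {v}` into `count` sets of size `size`, all satisfying `P`. -/
def CoverOff {V : Type*} (v : V) (count size : ℕ) (P : Finset V → Prop) : Prop :=
  ∃ f : Fin count → Finset V,
    (∀ i, P (f i) ∧ (f i).card = size) ∧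
    (∀ i j, i ≠ j → Disjoint (f i) (f j)) ∧
    (∀ i, v ∉ f i) ∧
    (∀ w, w ≠ v → ∃ i, w ∈ f i)

/-- `(p,q)`-partitionable graphs. -/
def PQPartitionable {V : Type*} [Fintype V] (G : SimpleGraph V) (p q : ℕ) : Prop :=
  2 ≤ p ∧ 2 ≤ q ∧ Fintype.card V = p * q + 1 ∧
  ∀ v : V,
    CoverOff v q p (fun S => IsIndep G (S : Set V)) ∧
    CoverOff v p q (fun S => G.IsClique (S : Set V))

/-- `G` has an odd hole: an induced odd cycle of length at least five. -/
def HasOddHole {V : Type*} (G : SimpleGraph V) : Prop :=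
  ∃ (n : ℕ) (s : Finset V), Odd n ∧ 5 ≤ n ∧ IsInducedCycle G n s

/-- A graph is perfect iff neither it nor its complement has an odd hole. -/
def GPerfect {V : Type*} (G : SimpleGraph V) : Prop :=
  ¬ HasOddHole G ∧ ¬ HasOddHole Gᶜ

/-- Every vertex has degree at least three and at most five. -/
def DegreeBounded {V : Type*} (G : SimpleGraph V) : Prop :=
  ∀ v, 3 ≤ (G.neighborSet v).ncard ∧ (G.neighborSet v).ncard ≤ 5

/-- The `n`-wheel: an `n`-cycle plus a vertex (`none`) adjacent to every cycle vertex. -/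
def wheel (n : ℕ) : SimpleGraph (Option (Fin n)) :=
  SimpleGraph.fromRel fun a b =>
    match a, b with
    | some i, some j => (SimpleGraph.cycleGraph n).Adj i j
    | none, some _ => True
    | _, none => False

/-- Vertex type of the standard 9-vertex labeling: `inl i` is `v_{i+1}`,
`inr j` is `u_{j+1}`. -/
abbrev V9 := Fin 5 ⊕ Fin 4

/-- Vertex type of the standard 10-vertex labeling. -/
abbrev V10 := Fin 5 ⊕ Fin 5

/-- The standard 9-vertex labeling: `v1 … v5` form a 5-hole; the neighbours of `u_i`
among the `v`'s are `v_{i+2}` and `v_{i+3}` together possibly with `v_i`. -/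
def Std9 (G : SimpleGraph V9) : Prop :=
  (∀ i j : Fin 5, G.Adj (.inl i) (.inl j) ↔ (j = i + 1 ∨ i = j + 1)) ∧
  (∀ (i : Fin 4) (k : Fin 5), G.Adj (.inr i) (.inl k) →
    k = i.castSucc + 2 ∨ k = i.castSucc + 3 ∨ k = i.castSucc) ∧
  (∀ i : Fin 4, G.Adj (.inr i) (.inl (i.castSucc + 2)) ∧ G.Adj (.inr i) (.inl (i.castSucc + 3)))

/-- The standard 10-vertex labeling. -/
def Std10 (G : SimpleGraph V10) : Prop :=
  (∀ i j : Fin 5, G.Adj (.inl i) (.inl j) ↔ (j = i + 1 ∨ i = j + 1)) ∧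
  (∀ (i k : Fin 5), G.Adj (.inr i) (.inl k) → k = i + 2 ∨ k = i + 3 ∨ k = i) ∧
  (∀ i : Fin 5, G.Adj (.inr i) (.inl (i + 2)) ∧ G.Adj (.inr i) (.inl (i + 3)))

/-- The 9-vertex graph of the standard labeling with prescribed `U`-edges and
prescribed extra edges `u_i v_i`. -/
def graph9 (uEdges : List (Fin 4 × Fin 4)) (extra : List (Fin 4)) : SimpleGraph V9 :=
  SimpleGraph.fromRel fun a b =>
    match a, b with
    | .inl i, .inl j => j = i + 1
    | .inr i, .inl k => k = i.castSucc + 2 ∨ k = i.castSucc + 3 ∨ (i ∈ extra ∧ k = i.castSucc)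
    | .inl _, .inr _ => False
    | .inr i, .inr j => (i, j) ∈ uEdges

/-- The 10-vertex graph of the standard labeling with prescribed `U`-edges and
prescribed extra edges `u_i v_i`. -/
def graph10 (uEdges : List (Fin 5 × Fin 5)) (extra : List (Fin 5)) : SimpleGraph V10 :=
  SimpleGraph.fromRel fun a b =>
    match a, b with
    | .inl i, .inl j => j = i + 1
    | .inr i, .inl k => k = i + 2 ∨ k = i + 3 ∨ (i ∈ extra ∧ k = i)
    | .inl _, .inr _ => False
    | .inr i, .inr j => (i, j) ∈ uEdges

/-- The graph `(12°435°1)`. -/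
def G12435 : SimpleGraph V10 :=
  graph10 [(0,1),(1,3),(3,2),(2,4),(4,0)] [1,4]

/-- The graph `(1°2°435°1°)`. -/
def G12435' : SimpleGraph V10 :=
  graph10 [(0,1),(1,3),(3,2),(2,4),(4,0)] [0,1,4]


/-! ### Auxiliary lemmas -/

section Aux

open Function Set

lemma wheel_adj_some_some {n : ℕ} {i j : Fin n} :
    (wheel n).Adj (some i) (some j) ↔ (cycleGraph n).Adj i j := by
  simp only [wheel, SimpleGraph.fromRel_adj]
  constructor
  · rintro ⟨h, h1 | h1⟩
    · exact h1
    · exact h1.symm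
  · intro h
    exact ⟨by simpa using (fun e => (cycleGraph n).irrefl (e ▸ h)), Or.inl h⟩

lemma wheel_adj_none_some {n : ℕ} {i : Fin n} : (wheel n).Adj none (some i) := by
  simp only [wheel, SimpleGraph.fromRel_adj]
  exact ⟨by simp, Or.inl trivial⟩

lemma wheel_adj_none_none {n : ℕ} : ¬ (wheel n).Adj (none : Option (Fin n)) none :=
  fun h => (wheel n).irrefl h

lemma cycle5_adj {i j : Fin 5} :
    (cycleGraph 5).Adj i j ↔ (j = i + 1 ∨ i = j + 1) := by
  revert i j; decide

/-- A halfspace bound transfers to the stable set polytope. -/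
lemma stab_sum_le {V : Type*} [Fintype V] (G : SimpleGraph V) (c : ℝ)
    (h : ∀ S : Set V, IsIndep G S → ∑ v, S.indicator (fun _ => (1:ℝ)) v ≤ c) :
    ∀ x ∈ stabPolytope G, ∑ v, x v ≤ c := by
  have hconv : Convex ℝ {y : V → ℝ | ∑ v, y v ≤ c} := by
    refine convex_halfSpace_le ?_ c
    constructor
    · intro a b; simp [Finset.sum_add_distrib]
    · intro a b; simp [Finset.mul_sum]
  have hsub : stabPolytope G ⊆ {y : V → ℝ | ∑ v, y v ≤ c} := by
    apply convexHull_min _ hconv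
    rintro x ⟨S, hS, rfl⟩
    exact h S hS
  exact fun x hx => hsub hx

lemma indicator_sum_eq {V : Type*} [Fintype V] [DecidableEq V] (S : Set V)
    [DecidablePred (· ∈ S)] :
    ∑ v, S.indicator (fun _ => (1:ℝ)) v = (Finset.univ.filter (· ∈ S)).card := by
  rw [Finset.card_filter]
  push_cast
  apply Finset.sum_congr rfl
  intro v _
  by_cases h : v ∈ S <;> simp [Set.indicator, h]

lemma not_tperfect_K4 : ¬ TPerfect (completeGraph (Fin 4)) := by
  classical
  intro h
  set x : Fin 4 → ℝ := fun _ => 1/3 with hxdef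
  have hxt : x ∈ tPolytope (completeGraph (Fin 4)) := by
    refine ⟨fun v => by norm_num [hxdef], fun u v _ => by norm_num [hxdef], ?_⟩
    rintro n s hodd ⟨hn3, hcard, -⟩
    have hn4 : n ≤ 4 := by
      rw [← hcard]; simpa using Finset.card_le_univ s
    have hn : n = 3 := by rcases hodd with ⟨k, hk⟩; omega
    subst hn
    have : ∑ v ∈ s, x v = 3 * (1/3 : ℝ) := by
      rw [Finset.sum_const, hcard]; push_cast; ring
    rw [this]; norm_num
  have hb : ∑ v, x v ≤ 1 := by
    refine stab_sum_le (completeGraph (Fin 4)) 1 ?_ x (h ▸ hxt)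
    intro S hS
    have hsub : S.Subsingleton := by
      intro a ha b hb
      by_contra hne
      exact hS ha hb hne (by simpa [completeGraph] using hne)
    rw [indicator_sum_eq]
    have : (Finset.univ.filter (· ∈ S)).card ≤ 1 := by
      apply Finset.card_le_one.2
      intro a ha b hb
      simp only [Finset.mem_filter] at ha hb
      exact hsub ha.2 hb.2
    exact_mod_cast this
  have : ∑ v, x v = 4 * (1/3 : ℝ) := by
    simp [hxdef, Finset.sum_const]
  rw [this] at hb; norm_num at hb

end Aux
section W5

open Function Set

lemma cycle5_no_triangle : ∀ i j k : Fin 5, (cycleGraph 5).Adj i j →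
    (cycleGraph 5).Adj j k → (cycleGraph 5).Adj i k → False := by decide

lemma cycle3_adj_of_ne : ∀ a b : Fin 3, a ≠ b → (cycleGraph 3).Adj a b := by decide

lemma cycle5_no_indep3 : ∀ i j k : Fin 5, i ≠ j → i ≠ k → j ≠ k →
    ¬(cycleGraph 5).Adj i j → ¬(cycleGraph 5).Adj j k → ¬(cycleGraph 5).Adj i k → False := by
  decide

lemma not_tperfect_W5 : ¬ TPerfect (wheel 5) := by
  classical
  intro h
  set x : Option (Fin 5) → ℝ := fun a => Option.casesOn a (1/5) (fun _ => 2/5) with hxdef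
  have hxle : ∀ a, x a ≤ 2/5 := by rintro (_|_) <;> norm_num [hxdef]
  have hx0 : ∀ a, 0 ≤ x a := by rintro (_|_) <;> norm_num [hxdef]
  have hxsome : ∀ i : Fin 5, x (some i) = 2/5 := fun i => rfl
  have hxnone : x none = 1/5 := rfl
  have hxt : x ∈ tPolytope (wheel 5) := by
    refine ⟨fun v => ⟨hx0 v, le_trans (hxle v) (by norm_num)⟩,
      fun u v _ => by have := hxle u; have := hxle v; linarith, ?_⟩
    rintro n s hodd ⟨hn3, hcard, ⟨e⟩⟩
    have hn6 : n ≤ 6 := by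
      rw [← hcard]
      calc s.card ≤ Fintype.card (Option (Fin 5)) := Finset.card_le_univ s
      _ = 6 := by simp
    have hbound : ∑ v ∈ s, x v ≤ s.card * (2/5 : ℝ) := by
      calc ∑ v ∈ s, x v ≤ ∑ _v ∈ s, (2/5 : ℝ) := Finset.sum_le_sum (fun v _ => hxle v)
      _ = s.card * (2/5 : ℝ) := by rw [Finset.sum_const]; push_cast; ring
    have hn : n = 3 ∨ n = 5 := by rcases hodd with ⟨k, hk⟩; omega
    rcases hn with hn | hn
    · subst hn
      -- s is a triangle in the wheel
      have hclique : ∀ a b, a ∈ s → b ∈ s → a ≠ b → (wheel 5).Adj a b := by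
        intro a b ha hb hne
        have hne' : (⟨a, ha⟩ : (s : Set (Option (Fin 5)))) ≠ ⟨b, hb⟩ := by
          simp [Subtype.ext_iff, hne]
        have h3 : (cycleGraph 3).Adj (e ⟨a, ha⟩) (e ⟨b, hb⟩) :=
          cycle3_adj_of_ne _ _ (e.injective.ne hne')
        have := e.map_adj_iff.1 h3
        simpa using this
      by_cases hnone : (none : Option (Fin 5)) ∈ s
      · have herase : ∀ v ∈ s.erase none, x v = (2/5 : ℝ) := by
          rintro (_|i) hv
          · exact absurd rfl (Finset.ne_of_mem_erase hv)
          · exact hxsome i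
        have hsum : ∑ v ∈ s, x v = x none + ∑ v ∈ s.erase none, x v :=
          (Finset.add_sum_erase s x hnone).symm
        have hcard' : (s.erase none).card = 2 := by
          rw [Finset.card_erase_of_mem hnone, hcard]
        have : ∑ v ∈ s.erase none, x v = 2 * (2/5 : ℝ) := by
          rw [Finset.sum_congr rfl herase, Finset.sum_const, hcard']
          push_cast; ring
        rw [hsum, this, hxnone]; norm_num
      · -- three rim vertices forming a triangle: impossible
        exfalso
        obtain ⟨a, b, c, ha, hb, hc, hab, hac, hbc⟩ := Finset.two_lt_card_iff.1 (by omega : 2 < s.card)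
        obtain ⟨i, rfl⟩ : ∃ i, a = some i := by
          cases a with
          | none => exact absurd ha hnone
          | some i => exact ⟨i, rfl⟩
        obtain ⟨j, rfl⟩ : ∃ j, b = some j := by
          cases b with
          | none => exact absurd hb hnone
          | some j => exact ⟨j, rfl⟩
        obtain ⟨k, rfl⟩ : ∃ k, c = some k := by
          cases c with
          | none => exact absurd hc hnone
          | some k => exact ⟨k, rfl⟩
        exact cycle5_no_triangle i j k
          (wheel_adj_some_some.1 (hclique _ _ ha hb hab))
          (wheel_adj_some_some.1 (hclique _ _ hb hc hbc))
          (wheel_adj_some_some.1 (hclique _ _ ha hc hac))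
    · subst hn
      rw [hcard] at hbound
      calc ∑ v ∈ s, x v ≤ 5 * (2/5 : ℝ) := by exact_mod_cast hbound
      _ ≤ (5 - 1)/2 := by norm_num
  have hb : ∑ v, x v ≤ 2 := by
    refine stab_sum_le (wheel 5) 2 ?_ x (h ▸ hxt)
    intro S hS
    rw [indicator_sum_eq]
    have hcard : (Finset.univ.filter (· ∈ S)).card ≤ 2 := by
      by_contra hgt
      obtain ⟨a, b, c, ha, hb, hc, hab, hac, hbc⟩ :=
        Finset.two_lt_card_iff.1 (Nat.lt_of_not_le hgt)
      simp only [Finset.mem_filter] at ha hb hc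
      have hnadj : ∀ p q, p ∈ S → q ∈ S → p ≠ q → ¬(wheel 5).Adj p q := fun p q hp hq hne =>
        hS hp hq hne
      have hsome : ∀ p q : Option (Fin 5), p ∈ S → q ∈ S → p ≠ q → p ≠ none := by
        rintro (_|i) (_|j) hp hq hne h
        · exact hne rfl
        · exact hnadj _ _ hp hq hne wheel_adj_none_some
        · exact Option.some_ne_none i h
        · exact Option.some_ne_none i h
      obtain ⟨i, rfl⟩ := Option.ne_none_iff_exists'.1 (hsome a b ha.2 hb.2 hab)
      obtain ⟨j, rfl⟩ := Option.ne_none_iff_exists'.1 (hsome b _ hb.2 ha.2 hab.symm)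
      obtain ⟨k, rfl⟩ := Option.ne_none_iff_exists'.1 (hsome c _ hc.2 ha.2 hac.symm)
      have hij : i ≠ j := by simpa using hab
      have hik : i ≠ k := by simpa using hac
      have hjk : j ≠ k := by simpa using hbc
      exact cycle5_no_indep3 i j k hij hik hjk
        (fun hadj => hnadj _ _ ha.2 hb.2 hab (wheel_adj_some_some.2 hadj))
        (fun hadj => hnadj _ _ hb.2 hc.2 hbc (wheel_adj_some_some.2 hadj))
        (fun hadj => hnadj _ _ ha.2 hc.2 hac (wheel_adj_some_some.2 hadj))
    exact_mod_cast hcard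
  have : ∑ v, x v = 11/5 := by
    rw [Fintype.sum_option]
    simp [hxnone, hxsome, Finset.sum_const]
    norm_num
  rw [this] at hb; norm_num at hb
end W5
section TMinorLemmas

open Function Set

/-- Composing two vertex-set restrictions. -/
def induceInduceIso {V : Type*} (G : SimpleGraph V) (S S' : Set V) (h : S ⊆ S') :
    G.induce S ≃g (G.induce S').induce {x : ↥S' | x.1 ∈ S} where
  toFun a := ⟨⟨a.1, h a.2⟩, a.2⟩
  invFun b := ⟨b.1.1, b.2⟩
  left_inv a := rfl
  right_inv b := rfl
  map_rel_iff' := by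
    intro a b
    simp [SimpleGraph.comap]

lemma tminor_induce_aux : ∀ (n : ℕ) (V : Type) [Fintype V] (G : SimpleGraph V) (S : Set V),
    S ≠ Set.univ → Sᶜ.ncard ≤ n → ∀ (W : Type) [Fintype W] (H : SimpleGraph W),
    (H ≃g G.induce S) → TMinor (FinGraph.of H) (FinGraph.of G) := by
  intro n
  induction n with
  | zero =>
    intro V _ G S hne hcard W _ H e
    exfalso
    apply hne
    have h0 : Sᶜ.ncard = 0 := Nat.le_zero.1 hcard
    have : Sᶜ = ∅ := (Set.ncard_eq_zero (Set.toFinite Sᶜ)).1 h0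
    simpa [Set.compl_empty_iff] using this
  | succ n ih =>
    intro V _ G S hne hcard W _ H e
    classical
    obtain ⟨v, hv⟩ : ∃ v, v ∉ S := by
      rcases Set.ne_univ_iff_exists_notMem S |>.1 hne with ⟨v, hv⟩
      exact ⟨v, hv⟩
    by_cases h' : insert v S = Set.univ
    · -- deleting the single vertex v
      have hSeq : S = {w | w ≠ v} := by
        ext w
        constructor
        · intro hw hwv
          exact hv (hwv ▸ hw)
        · intro hw
          have : w ∈ insert v S := h' ▸ Set.mem_univ w
          rcases this with h | h
          · exact absurd h hw
          · exact h
      refine Relation.ReflTransGen.single (Or.inl ⟨v, ⟨?_⟩⟩)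
      exact hSeq ▸ e
    · set S' := insert v S with hS'def
      letI : Fintype ↥S' := Set.Finite.fintype (Set.toFinite S')
      have hvS' : v ∈ S' := Set.mem_insert v S
      have hsub : S ⊆ S' := Set.subset_insert v S
      have hcompl : S'ᶜ = Sᶜ \ {v} := by
        ext w; simp [hS'def, Set.mem_insert_iff, not_or, and_comm]
      have hvc : v ∈ Sᶜ := hv
      have hn1 : 1 ≤ Sᶜ.ncard := by
        have := Set.ncard_pos (Set.toFinite Sᶜ) |>.2 ⟨v, hvc⟩
        omega
      have h2' : 2 ≤ Sᶜ.ncard := by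
        obtain ⟨w, hw⟩ := Set.ne_univ_iff_exists_notMem S' |>.1 h'
        have hwv : w ≠ v := fun h => hw (h ▸ hvS')
        have hwc : w ∈ Sᶜ := fun h => hw (hsub h)
        have := Set.one_lt_ncard (Set.toFinite Sᶜ) |>.2 ⟨v, hvc, w, hwc, fun h => hwv h.symm⟩
        omega
      have hcard' : S'ᶜ.ncard ≤ n := by
        rw [hcompl, Set.ncard_diff_singleton_of_mem hvc]
        omega
      have h1 : TMinor (FinGraph.of (G.induce S')) (FinGraph.of G) :=
        ih V G S' h' hcard' ↥S' (G.induce S') (RelIso.refl _)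
      have hT : ({x : ↥S' | x.1 ∈ S} : Set ↥S') ≠ Set.univ := by
        intro hu
        have : (⟨v, hvS'⟩ : ↥S') ∈ ({x : ↥S' | x.1 ∈ S} : Set ↥S') := hu ▸ Set.mem_univ _
        exact hv this
      have hTcard : ({x : ↥S' | x.1 ∈ S} : Set ↥S')ᶜ.ncard ≤ n := by
        have hsub1 : ({x : ↥S' | x.1 ∈ S} : Set ↥S')ᶜ ⊆ {(⟨v, hvS'⟩ : ↥S')} := by
          rintro ⟨w, hw⟩ hwc
          rcases hw with h | h
          · simp [h]
          · exact absurd h hwc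
        have := Set.ncard_le_ncard hsub1 (Set.finite_singleton _)
        rw [Set.ncard_singleton] at this
        omega
      have h2 : TMinor (FinGraph.of H) (FinGraph.of (G.induce S')) :=
        ih ↥S' (G.induce S') {x : ↥S' | x.1 ∈ S} hT hTcard W H
          (e.trans (induceInduceIso G S S' hsub))
      exact Relation.ReflTransGen.trans h1 h2

lemma tminor_of_iso_induce {V W : Type} [Fintype V] [Fintype W] (G : SimpleGraph V)
    (S : Set V) (H : SimpleGraph W) (hne : S ≠ Set.univ) (e : H ≃g G.induce S) :
    TMinor (FinGraph.of H) (FinGraph.of G) :=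
  tminor_induce_aux Sᶜ.ncard V G S hne le_rfl W H e

end TMinorLemmas
section Contract

open Function Set

lemma fin5_aux1 : ∀ i : Fin 5, i = 4 + 1 → i = 0 := by decide
lemma fin5_aux2 : ∀ i : Fin 5, (4:Fin 5) = i + 1 → i = 3 := by decide
lemma fin5_aux3 : ∀ i : Fin 5, i ≠ 4 → i ≠ 0 → i ≠ 3 → i = 1 ∨ i = 2 := by decide

lemma contractK4 {V : Type} [Fintype V] (G : SimpleGraph V)
    (v : Fin 5 → V) (hv : Function.Injective v)
    (hadj : ∀ i j, G.Adj (v i) (v j) ↔ (j = i + 1 ∨ i = j + 1))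
    (u : V) (hu : ∀ i, u ≠ v i)
    (h0 : G.Adj u (v 0)) (h1 : G.Adj u (v 1)) (h2 : G.Adj u (v 2))
    (h4 : ¬ G.Adj u (v 4))
    (hcover : ∀ x : V, x = u ∨ ∃ i, x = v i) :
    ContractStep (FinGraph.of G) (FinGraph.of (completeGraph (Fin 4))) := by
  classical
  have hvne : ∀ i j : Fin 5, i ≠ j → v i ≠ v j := fun i j hij => hv.ne hij
  -- the neighbours of v 4 are exactly among {v 0, v 3}
  have hnbr : ∀ x, G.Adj (v 4) x → x = v 0 ∨ x = v 3 := by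
    intro x hx
    rcases hcover x with rfl | ⟨i, rfl⟩
    · exact absurd hx.symm h4
    · rcases (hadj 4 i).1 hx with h | h
      · exact Or.inl (congrArg v (fin5_aux1 i h))
      · exact Or.inr (congrArg v (fin5_aux2 i h))
  have hindep : IsIndep G (G.neighborSet (v 4)) := by
    intro x hx y hy hne hadjxy
    rcases hnbr x hx with rfl | rfl <;> rcases hnbr y hy with rfl | rfl
    · exact hne rfl
    · exact (by decide : ¬((3:Fin 5) = 0 + 1 ∨ (0:Fin 5) = 3 + 1)) ((hadj 0 3).1 hadjxy)
    · exact (by decide : ¬((0:Fin 5) = 3 + 1 ∨ (3:Fin 5) = 0 + 1)) ((hadj 3 0).1 hadjxy)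
    · exact hne rfl
  -- the three vertices surviving the contraction
  have hu4 : u ≠ v 4 := hu 4
  have hnu4 : ¬ G.Adj (v 4) u := fun h => h4 h.symm
  have h14 : v 1 ≠ v 4 := hvne 1 4 (by decide)
  have hn14 : ¬ G.Adj (v 4) (v 1) := fun h =>
    (by decide : ¬((1:Fin 5) = 4 + 1 ∨ (4:Fin 5) = 1 + 1)) ((hadj 4 1).1 h)
  have h24 : v 2 ≠ v 4 := hvne 2 4 (by decide)
  have hn24 : ¬ G.Adj (v 4) (v 2) := fun h =>
    (by decide : ¬((2:Fin 5) = 4 + 1 ∨ (4:Fin 5) = 2 + 1)) ((hadj 4 2).1 h)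
  let xu : {w : V // w ≠ v 4 ∧ ¬ G.Adj (v 4) w} := ⟨u, hu4, hnu4⟩
  let x1 : {w : V // w ≠ v 4 ∧ ¬ G.Adj (v 4) w} := ⟨v 1, h14, hn14⟩
  let x2 : {w : V // w ≠ v 4 ∧ ¬ G.Adj (v 4) w} := ⟨v 2, h24, hn24⟩
  let f : Fin 4 → Option {w : V // w ≠ v 4 ∧ ¬ G.Adj (v 4) w} := ![none, some xu, some x1, some x2]
  have hbij : Function.Bijective f := by
    constructor
    · intro a b hab
      have hu1 : u ≠ v 1 := hu 1
      have hu2 : u ≠ v 2 := hu 2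
      have h12 : v 1 ≠ v 2 := hvne 1 2 (by decide)
      have hs1 : v 1 ≠ u := Ne.symm (hu 1)
      have hs2 : v 2 ≠ u := Ne.symm (hu 2)
      have h21 : v 2 ≠ v 1 := hvne 2 1 (by decide)
      fin_cases a <;> fin_cases b <;>
        simp_all [f, xu, x1, x2, Option.some.injEq, Subtype.mk.injEq]
    · rintro (_ | ⟨x, hx1, hx2⟩)
      · exact ⟨0, rfl⟩
      · rcases hcover x with rfl | ⟨i, rfl⟩
        · exact ⟨1, rfl⟩
        · have hi4 : i ≠ 4 := fun h => hx1 (by rw [h])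
          have hi0 : i ≠ 0 := by
            rintro rfl
            exact hx2 ((hadj 4 0).2 (Or.inl (by decide)))
          have hi3 : i ≠ 3 := by
            rintro rfl
            exact hx2 ((hadj 4 3).2 (Or.inr (by decide)))
          have : i = 1 ∨ i = 2 := fin5_aux3 i hi4 hi0 hi3
          rcases this with rfl | rfl
          · exact ⟨2, rfl⟩
          · exact ⟨3, rfl⟩
  -- adjacency facts in the contracted graph
  set tc := tContract G (v 4) with htc
  have hA12 : tc.Adj (some xu) (some x1) := by
    refine ⟨?_, Or.inl h1⟩
    simp [xu, x1, Option.some_ne_none, hu 1]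
  have hA13 : tc.Adj (some xu) (some x2) := by
    refine ⟨?_, Or.inl h2⟩
    simp [xu, x2, hu 2]
  have hA23 : tc.Adj (some x1) (some x2) := by
    refine ⟨?_, Or.inl ((hadj 1 2).2 (Or.inl (by decide)))⟩
    simp [x1, x2, hvne 1 2 (by decide)]
  have hAun : tc.Adj (some xu) none := by
    refine ⟨by simp, Or.inl ⟨v 0, Or.inr ((hadj 4 0).2 (Or.inl (by decide))), h0⟩⟩
  have hA1n : tc.Adj (some x1) none := by
    refine ⟨by simp, Or.inl ⟨v 0, Or.inr ((hadj 4 0).2 (Or.inl (by decide))),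
      (hadj 1 0).2 (Or.inr (by decide))⟩⟩
  have hA2n : tc.Adj (some x2) none := by
    refine ⟨by simp, Or.inl ⟨v 3, Or.inr ((hadj 4 3).2 (Or.inr (by decide))),
      (hadj 2 3).2 (Or.inl (by decide))⟩⟩
  have hiso : completeGraph (Fin 4) ≃g tc := by
    refine ⟨Equiv.ofBijective f hbij, ?_⟩
    intro a b
    constructor
    · intro h
      simp only [completeGraph, SimpleGraph.top_adj]
      intro hab
      subst hab
      exact tc.irrefl h
    · intro h
      have hab : a ≠ b := by simpa [completeGraph] using h
      fin_cases a <;> fin_cases b <;>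
        first
          | exact absurd rfl hab
          | exact hAun.symm | exact hA1n.symm | exact hA2n.symm
          | exact hAun | exact hA1n | exact hA2n
          | exact hA12 | exact hA13 | exact hA23
          | exact hA12.symm | exact hA13.symm | exact hA23.symm
  exact ⟨v 4, hindep, ⟨hiso⟩⟩

end Contract
section Key

open Function Set

lemma isoW5cover {V : Type} [Fintype V] (G : SimpleGraph V)
    (v : Fin 5 → V) (hv : Function.Injective v)
    (hadj : ∀ i j, G.Adj (v i) (v j) ↔ (j = i + 1 ∨ i = j + 1))
    (u : V) (hu : ∀ i, u ≠ v i) (hall : ∀ i, G.Adj u (v i))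
    (hcover : ∀ x : V, x = u ∨ ∃ i, x = v i) :
    Nonempty (G ≃g wheel 5) := by
  let f : Option (Fin 5) → V := fun a => Option.casesOn a u v
  have hbij : Function.Bijective f := by
    constructor
    · rintro (_|i) (_|j) h
      · rfl
      · exact absurd h (hu j)
      · exact absurd h.symm (hu i)
      · exact congrArg some (hv h)
    · intro x
      rcases hcover x with rfl | ⟨i, rfl⟩
      · exact ⟨none, rfl⟩
      · exact ⟨some i, rfl⟩
  refine ⟨SimpleGraph.Iso.symm ⟨Equiv.ofBijective f hbij, ?_⟩⟩
  rintro (_|i) (_|j)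
  · exact iff_of_false (fun h => G.loopless.irrefl _ h) wheel_adj_none_none
  · exact iff_of_true (hall j) wheel_adj_none_some
  · exact iff_of_true ((hall i).symm) wheel_adj_none_some.symm
  · show G.Adj (v i) (v j) ↔ (wheel 5).Adj (some i) (some j)
    rw [hadj i j, ← cycle5_adj, ← wheel_adj_some_some]

lemma card6_of_hole {V : Type} [Fintype V] [DecidableEq V] (v : Fin 5 → V)
    (hv : Function.Injective v) (u : V) (hu : ∀ i, u ≠ v i) :
    (insert u (Finset.image v Finset.univ)).card = 6 := by
  have hnotmem : u ∉ Finset.image v Finset.univ := by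
    simp only [Finset.mem_image, Finset.mem_univ, true_and, not_exists]
    exact fun i h => hu i h.symm
  rw [Finset.card_insert_of_notMem hnotmem, Finset.card_image_of_injective _ hv]
  simp

lemma keyK4 {V : Type} [Fintype V] (G : SimpleGraph V)
    (hcore : ∀ B : FinGraph, ProperTMinor B (FinGraph.of G) → TPerfect B.graph)
    (v : Fin 5 → V) (hv : Function.Injective v)
    (hadj : ∀ i j, G.Adj (v i) (v j) ↔ (j = i + 1 ∨ i = j + 1))
    (u : V) (hu : ∀ i, u ≠ v i)
    (h0 : G.Adj u (v 0)) (h1 : G.Adj u (v 1)) (h2 : G.Adj u (v 2))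
    (h4 : ¬ G.Adj u (v 4)) : False := by
  classical
  have hcard6 : 6 ≤ Fintype.card V := by
    rw [← card6_of_hole v hv u hu, ← Finset.card_univ]
    exact Finset.card_le_univ _
  have hcard4 : Fintype.card (Fin 4) < Fintype.card V := by simp; omega
  set T : Set V := insert u (Set.range v) with hT
  have memu : u ∈ T := Set.mem_insert _ _
  have memv : ∀ i, v i ∈ T := fun i => Set.mem_insert_of_mem _ ⟨i, rfl⟩
  by_cases hTu : T = Set.univ
  · have hcover : ∀ x : V, x = u ∨ ∃ i, x = v i := by
      intro x
      have hx : x ∈ T := hTu ▸ Set.mem_univ x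
      rcases hx with h | ⟨i, h⟩
      · exact Or.inl h
      · exact Or.inr ⟨i, h.symm⟩
    have step := contractK4 G v hv hadj u hu h0 h1 h2 h4 hcover
    exact not_tperfect_K4
      (hcore _ ⟨Relation.ReflTransGen.single (Or.inr step), hcard4⟩)
  · letI : Fintype ↥T := Set.Finite.fintype (Set.toFinite T)
    set H := G.induce T with hH
    let u' : ↥T := ⟨u, memu⟩
    let v' : Fin 5 → ↥T := fun i => ⟨v i, memv i⟩
    have hv' : Function.Injective v' := fun i j hij => hv (congrArg Subtype.val hij)
    have hadj' : ∀ i j, H.Adj (v' i) (v' j) ↔ (j = i + 1 ∨ i = j + 1) := by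
      intro i j
      rw [← hadj i j]
      rfl
    have hu' : ∀ i, u' ≠ v' i := fun i h => hu i (congrArg Subtype.val h)
    have hcover' : ∀ x : ↥T, x = u' ∨ ∃ i, x = v' i := by
      rintro ⟨x, hx⟩
      rcases hx with h | ⟨i, h⟩
      · exact Or.inl (Subtype.ext h)
      · exact Or.inr ⟨i, Subtype.ext h.symm⟩
    have step := contractK4 H v' hv' hadj' u' hu' (by exact h0) (by exact h1)
      (by exact h2) (by exact h4) hcover'
    have hmin : TMinor (FinGraph.of H) (FinGraph.of G) :=
      tminor_of_iso_induce G T H hTu (RelIso.refl _)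
    exact not_tperfect_K4
      (hcore _ ⟨Relation.ReflTransGen.tail hmin (Or.inr step), hcard4⟩)

lemma keyW5 {V : Type} [Fintype V] (G : SimpleGraph V)
    (hcore : ∀ B : FinGraph, ProperTMinor B (FinGraph.of G) → TPerfect B.graph)
    (v : Fin 5 → V) (hv : Function.Injective v)
    (hadj : ∀ i j, G.Adj (v i) (v j) ↔ (j = i + 1 ∨ i = j + 1))
    (u : V) (hu : ∀ i, u ≠ v i) (hall : ∀ i, G.Adj u (v i)) :
    Nonempty (G ≃g wheel 5) := by
  classical
  set T : Set V := insert u (Set.range v) with hT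
  have memu : u ∈ T := Set.mem_insert _ _
  have memv : ∀ i, v i ∈ T := fun i => Set.mem_insert_of_mem _ ⟨i, rfl⟩
  by_cases hTu : T = Set.univ
  · have hcover : ∀ x : V, x = u ∨ ∃ i, x = v i := by
      intro x
      have hx : x ∈ T := hTu ▸ Set.mem_univ x
      rcases hx with h | ⟨i, h⟩
      · exact Or.inl h
      · exact Or.inr ⟨i, h.symm⟩
    exact isoW5cover G v hv hadj u hu hall hcover
  · exfalso
    letI : Fintype ↥T := Set.Finite.fintype (Set.toFinite T)
    set H := G.induce T with hH
    let u' : ↥T := ⟨u, memu⟩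
    let v' : Fin 5 → ↥T := fun i => ⟨v i, memv i⟩
    have hv' : Function.Injective v' := fun i j hij => hv (congrArg Subtype.val hij)
    have hadj' : ∀ i j, H.Adj (v' i) (v' j) ↔ (j = i + 1 ∨ i = j + 1) := by
      intro i j
      rw [← hadj i j]
      rfl
    have hu' : ∀ i, u' ≠ v' i := fun i h => hu i (congrArg Subtype.val h)
    have hall' : ∀ i, H.Adj u' (v' i) := fun i => by exact hall i
    have hcover' : ∀ x : ↥T, x = u' ∨ ∃ i, x = v' i := by
      rintro ⟨x, hx⟩
      rcases hx with h | ⟨i, h⟩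
      · exact Or.inl (Subtype.ext h)
      · exact Or.inr ⟨i, Subtype.ext h.symm⟩
    obtain ⟨e⟩ := isoW5cover H v' hv' hadj' u' hu' hall' hcover'
    have hmin : TMinor (FinGraph.of (wheel 5)) (FinGraph.of G) :=
      tminor_of_iso_induce G T (wheel 5) hTu e.symm
    have hcard7 : 7 ≤ Fintype.card V := by
      obtain ⟨w, hw⟩ := Set.ne_univ_iff_exists_notMem T |>.1 hTu
      have hwu : w ≠ u := fun h => hw (h ▸ memu)
      have hwv : ∀ i, w ≠ v i := fun i h => hw (h ▸ memv i)
      have hnotmem : w ∉ insert u (Finset.image v Finset.univ) := by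
        simp only [Finset.mem_insert, Finset.mem_image, Finset.mem_univ, true_and, not_or,
          not_exists]
        exact ⟨hwu, fun i h => hwv i h.symm⟩
      have : (insert w (insert u (Finset.image v Finset.univ))).card = 7 := by
        rw [Finset.card_insert_of_notMem hnotmem, card6_of_hole v hv u hu]
      rw [← this, ← Finset.card_univ]
      exact Finset.card_le_univ _
    have hcardW : Fintype.card (Option (Fin 5)) < Fintype.card V := by simp; omega
    exact not_tperfect_W5 (hcore _ ⟨hmin, hcardW⟩)

end Key
section Fin5Facts

lemma bool5_classify : ∀ b : Fin 5 → Bool,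
    (∃ a : Fin 5, b a = true ∧ b (a+1) = true ∧ b (a+2) = true ∧ b (a+4) = false)
    ∨ (∃ a : Fin 5, b (2*a) = false ∧ b (2*a+2) = false ∧ b (2*a+4) = false ∧ b (2*a+3) = true)
    ∨ (∀ i, b i = true)
    ∨ (∀ i, b i = false)
    ∨ (∃ a : Fin 5, b a = true ∧ b (a+1) = true ∧ b (a+2) = false ∧ b (a+3) = false ∧
        b (a+4) = false)
    ∨ (∃ a : Fin 5, b a = true ∧ b (a+1) = true ∧ b (a+3) = true ∧ b (a+2) = false ∧
        b (a+4) = false) := by decide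

lemma fin5_rot : ∀ a i j : Fin 5, ((j+a = i+a+1 ∨ i+a = j+a+1) ↔ (j = i+1 ∨ i = j+1)) := by
  decide

lemma fin5_compl : ∀ a i j : Fin 5,
    ((2*(i+a) ≠ 2*(j+a)) ∧ ¬(2*(j+a) = 2*(i+a)+1 ∨ 2*(i+a) = 2*(j+a)+1)) ↔
      (j = i+1 ∨ i = j+1) := by decide

lemma fin5_compl0 : ∀ i j : Fin 5,
    ((2*i ≠ 2*j) ∧ ¬(2*j = 2*i+1 ∨ 2*i = 2*j+1)) ↔ (j = i+1 ∨ i = j+1) := by decide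

lemma fin5_inj2 : ∀ a i j : Fin 5, 2*(i+a) = 2*(j+a) → i = j := by decide

lemma fin5_inj2' : ∀ i j : Fin 5, 2*i = 2*j → i = j := by decide

lemma fin5_idx : ∀ a : Fin 5, 2*((0:Fin 5)+a) = 2*a ∧ 2*((1:Fin 5)+a) = 2*a+2 ∧
    2*((2:Fin 5)+a) = 2*a+4 ∧ 2*((4:Fin 5)+a) = 2*a+3 := by decide

lemma fin5_idx' : ∀ a : Fin 5, (0:Fin 5)+a = a ∧ (1:Fin 5)+a = a+1 ∧ (2:Fin 5)+a = a+2 ∧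
    (4:Fin 5)+a = a+4 := by decide

lemma fin5_all : ∀ a i : Fin 5, i = a ∨ i = a+1 ∨ i = a+2 ∨ i = a+3 ∨ i = a+4 := by decide

lemma fin5_ne : ∀ a : Fin 5, a ≠ a+1 ∧ a ≠ a+3 ∧ a+1 ≠ a+3 := by decide

lemma fin5_no_path : ∀ a i j k : Fin 5,
    (i = a ∨ i = a+1 ∨ i = a+3) → (j = a ∨ j = a+1 ∨ j = a+3) → (k = a ∨ k = a+1 ∨ k = a+3) →
    (j = i+1 ∨ i = j+1) → (k = j+1 ∨ j = k+1) → i ≠ k → False := by decide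

end Fin5Facts

/-- in a core graph different from `W5` and its complement, every vertex
outside a 5-hole has either exactly two neighbours on it which are consecutive, or
exactly three neighbours on it which are not consecutive. -/
theorem stmt5 {V : Type} [Fintype V] (G : SimpleGraph V)
    (hc : IsCore G)
    (hw : IsEmpty (G ≃g wheel 5)) (hwc : IsEmpty (G ≃g (wheel 5)ᶜ))
    (s : Finset V) (hs : IsInducedCycle G 5 s) :
    ∀ u : V, u ∉ s →
      Xor'
        ({w : V | w ∈ s ∧ G.Adj u w}.ncard = 2 ∧
          ∃ a b : V, a ∈ s ∧ b ∈ s ∧ G.Adj u a ∧ G.Adj u b ∧ G.Adj a b)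
        ({w : V | w ∈ s ∧ G.Adj u w}.ncard = 3 ∧
          ¬ ∃ a b c : V, (a ∈ s ∧ G.Adj u a) ∧ (b ∈ s ∧ G.Adj u b) ∧
            (c ∈ s ∧ G.Adj u c) ∧ a ≠ c ∧ G.Adj a b ∧ G.Adj b c) := by
  classical
  obtain ⟨-, hcard, ⟨e⟩⟩ := hs
  set v : Fin 5 → V := fun i => (e.symm i : V) with hvdef
  have hvmem : ∀ i, v i ∈ s := fun i => Finset.mem_coe.1 (e.symm i).2
  have hv : Function.Injective v := fun i j hij =>
    e.symm.injective (Subtype.ext hij)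
  have hadjv : ∀ i j, G.Adj (v i) (v j) ↔ (j = i + 1 ∨ i = j + 1) := by
    intro i j
    rw [← cycle5_adj]
    exact e.symm.map_adj_iff
  have hsurj : ∀ w, w ∈ s → ∃ i, w = v i := by
    intro w hws
    refine ⟨e ⟨w, Finset.mem_coe.2 hws⟩, ?_⟩
    have := e.symm_apply_apply ⟨w, Finset.mem_coe.2 hws⟩
    exact (congrArg Subtype.val this).symm
  intro u hus
  have hu : ∀ i, u ≠ v i := fun i h => hus (by rw [h]; exact hvmem i)
  set b : Fin 5 → Bool := fun i => decide (G.Adj u (v i)) with hbdef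
  have hAdj : ∀ p : Fin 5, b p = true → G.Adj u (v p) := fun p h => of_decide_eq_true h
  have hNAdj : ∀ p : Fin 5, b p = false → ¬ G.Adj u (v p) := fun p h => of_decide_eq_false h
  have hAdj' : ∀ p : Fin 5, G.Adj u (v p) → b p = true := fun p h => decide_eq_true h
  rcases bool5_classify b with ⟨a, ha0, ha1, ha2, ha4⟩ | ⟨a, hf0, hf2, hf4, ht3⟩ |
    hall | hall | ⟨a, ht0, ht1, hf2, hf3, hf4⟩ | ⟨a, ht0, ht1, ht3, hf2, hf4⟩
  · -- three consecutive neighbours v a, v (a+1), v (a+2) and a non-neighbour v (a+4) : K4 minor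
    exfalso
    obtain ⟨e0, e1, e2, e4⟩ := fin5_idx' a
    refine keyK4 G hc.1 (fun k => v (k + a)) ?_ ?_ u (fun i => hu (i + a)) ?_ ?_ ?_ ?_
    · exact fun x y h => add_right_cancel (hv h)
    · intro i j
      rw [hadjv]
      exact fin5_rot a i j
    · show G.Adj u (v (0 + a)); rw [e0]; exact hAdj a ha0
    · show G.Adj u (v (1 + a)); rw [e1]; exact hAdj _ ha1
    · show G.Adj u (v (2 + a)); rw [e2]; exact hAdj _ ha2
    · show ¬ G.Adj u (v (4 + a)); rw [e4]; exact hNAdj _ ha4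
  · -- complement case : K4 minor of the complement
    exfalso
    obtain ⟨e0, e1, e2, e4⟩ := fin5_idx a
    refine keyK4 Gᶜ hc.2 (fun k => v (2*(k + a))) ?_ ?_ u (fun i => hu _) ?_ ?_ ?_ ?_
    · exact fun x y h => fin5_inj2 a x y (hv h)
    · intro i j
      rw [SimpleGraph.compl_adj, hv.ne_iff, hadjv]
      exact fin5_compl a i j
    · show Gᶜ.Adj u (v (2*(0 + a)))
      rw [e0]; exact (SimpleGraph.compl_adj _ _ _).2 ⟨hu _, hNAdj _ hf0⟩
    · show Gᶜ.Adj u (v (2*(1 + a)))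
      rw [e1]; exact (SimpleGraph.compl_adj _ _ _).2 ⟨hu _, hNAdj _ hf2⟩
    · show Gᶜ.Adj u (v (2*(2 + a)))
      rw [e2]; exact (SimpleGraph.compl_adj _ _ _).2 ⟨hu _, hNAdj _ hf4⟩
    · show ¬ Gᶜ.Adj u (v (2*(4 + a)))
      rw [e4]
      intro hcadj
      exact ((SimpleGraph.compl_adj _ _ _).1 hcadj).2 (hAdj _ ht3)
  · -- u adjacent to the whole hole : G is the 5-wheel
    exfalso
    exact hw.false (keyW5 G hc.1 v hv hadjv u hu (fun i => hAdj i (hall i))).some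
  · -- u has no neighbour on the hole : the complement is the 5-wheel
    exfalso
    have hiso := keyW5 Gᶜ hc.2 (fun k => v (2*k)) (fun x y h => fin5_inj2' x y (hv h))
      (fun i j => by rw [SimpleGraph.compl_adj, hv.ne_iff, hadjv]; exact fin5_compl0 i j)
      u (fun i => hu _)
      (fun i => (SimpleGraph.compl_adj _ _ _).2 ⟨hu _, hNAdj _ (hall _)⟩)
    obtain ⟨eiso⟩ := hiso
    refine hwc.false ⟨eiso.toEquiv, ?_⟩
    intro p q
    rw [SimpleGraph.compl_adj]
    constructor
    · rintro ⟨hne, hnadj⟩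
      by_contra hnG
      exact hnadj (eiso.map_adj_iff.2
        ((SimpleGraph.compl_adj _ _ _).2 ⟨fun h => hne (congrArg eiso h), hnG⟩))
    · intro h
      refine ⟨fun hab => G.ne_of_adj h (eiso.injective hab), fun hwadj => ?_⟩
      exact ((SimpleGraph.compl_adj _ _ _).1 (eiso.map_adj_iff.1 hwadj)).2 h
  · -- exactly two consecutive neighbours : case (i)
    have hNeq : {w : V | w ∈ s ∧ G.Adj u w} = {v a, v (a+1)} := by
      ext w
      simp only [Set.mem_setOf_eq, Set.mem_insert_iff, Set.mem_singleton_iff]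
      constructor
      · rintro ⟨hws, hwadj⟩
        obtain ⟨i, rfl⟩ := hsurj w hws
        rcases fin5_all a i with rfl | rfl | rfl | rfl | rfl
        · exact Or.inl rfl
        · exact Or.inr rfl
        · exact absurd hwadj (hNAdj _ hf2)
        · exact absurd hwadj (hNAdj _ hf3)
        · exact absurd hwadj (hNAdj _ hf4)
      · rintro (rfl | rfl)
        · exact ⟨hvmem a, hAdj a ht0⟩
        · exact ⟨hvmem (a+1), hAdj _ ht1⟩
    have hncard : {w : V | w ∈ s ∧ G.Adj u w}.ncard = 2 := by
      rw [hNeq]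
      exact Set.ncard_pair (hv.ne (fin5_ne a).1)
    refine Or.inl ⟨⟨hncard, ⟨v a, v (a+1), hvmem a, hvmem (a+1), hAdj a ht0, hAdj _ ht1,
      (hadjv a (a+1)).2 (Or.inl rfl)⟩⟩, fun hB => ?_⟩
    rw [hB.1] at hncard
    omega
  · -- exactly three neighbours, not consecutive : case (ii)
    have hNeq : {w : V | w ∈ s ∧ G.Adj u w} = {v a, v (a+1), v (a+3)} := by
      ext w
      simp only [Set.mem_setOf_eq, Set.mem_insert_iff, Set.mem_singleton_iff]
      constructor
      · rintro ⟨hws, hwadj⟩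
        obtain ⟨i, rfl⟩ := hsurj w hws
        rcases fin5_all a i with rfl | rfl | rfl | rfl | rfl
        · exact Or.inl rfl
        · exact Or.inr (Or.inl rfl)
        · exact absurd hwadj (hNAdj _ hf2)
        · exact Or.inr (Or.inr rfl)
        · exact absurd hwadj (hNAdj _ hf4)
      · rintro (rfl | rfl | rfl)
        · exact ⟨hvmem a, hAdj a ht0⟩
        · exact ⟨hvmem (a+1), hAdj _ ht1⟩
        · exact ⟨hvmem (a+3), hAdj _ ht3⟩
    obtain ⟨hne1, hne2, hne3⟩ := fin5_ne a
    have hncard : {w : V | w ∈ s ∧ G.Adj u w}.ncard = 3 := by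
      rw [hNeq]
      exact Set.ncard_eq_three.2 ⟨v a, v (a+1), v (a+3), hv.ne hne1, hv.ne hne2, hv.ne hne3, rfl⟩
    have hnopath : ¬ ∃ p q r : V, (p ∈ s ∧ G.Adj u p) ∧ (q ∈ s ∧ G.Adj u q) ∧
        (r ∈ s ∧ G.Adj u r) ∧ p ≠ r ∧ G.Adj p q ∧ G.Adj q r := by
      rintro ⟨p, q, r, ⟨hps, hpu⟩, ⟨hqs, hqu⟩, ⟨hrs, hru⟩, hpr, hpq, hqr⟩
      obtain ⟨i, rfl⟩ := hsurj p hps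
      obtain ⟨j, rfl⟩ := hsurj q hqs
      obtain ⟨k, rfl⟩ := hsurj r hrs
      have hmem : ∀ m : Fin 5, G.Adj u (v m) → (m = a ∨ m = a+1 ∨ m = a+3) := by
        intro m hm
        rcases fin5_all a m with rfl | rfl | rfl | rfl | rfl
        · exact Or.inl rfl
        · exact Or.inr (Or.inl rfl)
        · exact absurd hm (hNAdj _ hf2)
        · exact Or.inr (Or.inr rfl)
        · exact absurd hm (hNAdj _ hf4)
      exact fin5_no_path a i j k (hmem i hpu) (hmem j hqu) (hmem k hru)
        ((hadjv i j).1 hpq) ((hadjv j k).1 hqr) (fun h => hpr (congrArg v h))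
    refine Or.inr ⟨⟨hncard, hnopath⟩, fun hA => ?_⟩
    rw [hA.1] at hncard
    omega

end TP
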